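/- Let M be a row-stochastic real n\times n matrix with nonnegative entries and let B be a real n\times n matrix with |B_{v,w}| \le c_1 M_{v,w} for all v, w, where c_1 > 0 is a constant. Then for every integer j \ge 2 and every index v, \sum_{w} \sum_{j_1 + j_2 + 2 = j,\, j_1, j_2 \ge 0} |(B M^{j_1})_{v,w}| \cdot |(B M^{j_2})_{w,v}| \le c_1^2 \, j \, (M^j)_{v,v}. -/

import Mathlib

open Matrix Finset

private lemma pow_nonneg_entry {n : ℕ} (M : Matrix (Fin n) (Fin n) ℝ)
    (hMnonneg : ∀ i j, 0 ≤ M i j) : ∀ k i l, 0 ≤ (M ^ k) i l := by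
  intro k
  induction k with
  | zero => intro i l; simp [Matrix.one_apply]; positivity
  | succ k ih =>
    intro i l
    rw [pow_succ, Matrix.mul_apply]
    exact Finset.sum_nonneg fun u _ => mul_nonneg (ih i u) (hMnonneg u l)

private lemma BMpow_bound {n : ℕ} (M B : Matrix (Fin n) (Fin n) ℝ) (c₁ : ℝ)
    (hMnonneg : ∀ i j, 0 ≤ M i j) (hB : ∀ v w, |B v w| ≤ c₁ * M v w) :
    ∀ k v w, |(B * M ^ k) v w| ≤ c₁ * (M ^ (k + 1)) v w := by
  intro k v w
  rw [Matrix.mul_apply]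
  calc |∑ u, B v u * (M ^ k) u w| ≤ ∑ u, |B v u * (M ^ k) u w| :=
        Finset.abs_sum_le_sum_abs _ _
    _ ≤ ∑ u, (c₁ * M v u) * (M ^ k) u w := by
        apply Finset.sum_le_sum
        intro u _
        rw [abs_mul, abs_of_nonneg (pow_nonneg_entry M hMnonneg k u w)]
        exact mul_le_mul_of_nonneg_right (hB v u) (pow_nonneg_entry M hMnonneg k u w)
    _ = c₁ * (M ^ (k + 1)) v w := by
        rw [pow_succ', Matrix.mul_apply, Finset.mul_sum]
        simp [mul_assoc]

/-- For a row-stochastic matrix `M` with nonnegative entries and a matrix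
`B` with `|B_{v,w}| ≤ c₁ M_{v,w}`, one has for every `j ≥ 2` and index `v`:
`∑_w ∑_{j₁+j₂+2=j} |(B M^{j₁})_{v,w}| |(B M^{j₂})_{w,v}| ≤ c₁² j (M^j)_{v,v}`. -/
theorem Y_sum_bound {n : ℕ} (M B : Matrix (Fin n) (Fin n) ℝ) (c₁ : ℝ) (hc₁ : 0 < c₁)
    (hMnonneg : ∀ i j, 0 ≤ M i j) (hMrow : ∀ i, ∑ j, M i j = 1)
    (hB : ∀ v w, |B v w| ≤ c₁ * M v w)
    (j : ℕ) (hj : 2 ≤ j) (v : Fin n) :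
    ∑ w, ∑ p ∈ (Finset.range j ×ˢ Finset.range j).filter (fun p => p.1 + p.2 + 2 = j),
        |(B * M ^ p.1) v w| * |(B * M ^ p.2) w v| ≤
      c₁ ^ 2 * j * (M ^ j) v v := by
  rw [Finset.sum_comm]
  set s := (Finset.range j ×ˢ Finset.range j).filter (fun p => p.1 + p.2 + 2 = j) with hs
  have hMj : 0 ≤ (M ^ j) v v := pow_nonneg_entry M hMnonneg j v v
  have key : ∀ p ∈ s, ∑ w, |(B * M ^ p.1) v w| * |(B * M ^ p.2) w v| ≤ c₁ ^ 2 * (M ^ j) v v := by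
    intro p hp
    simp only [hs, Finset.mem_filter] at hp
    calc ∑ w, |(B * M ^ p.1) v w| * |(B * M ^ p.2) w v|
        ≤ ∑ w, (c₁ * (M ^ (p.1 + 1)) v w) * (c₁ * (M ^ (p.2 + 1)) w v) := by
          apply Finset.sum_le_sum
          intro w _
          exact mul_le_mul (BMpow_bound M B c₁ hMnonneg hB p.1 v w)
            (BMpow_bound M B c₁ hMnonneg hB p.2 w v) (abs_nonneg _)
            (mul_nonneg hc₁.le (pow_nonneg_entry M hMnonneg _ v w))
      _ = c₁ ^ 2 * (M ^ j) v v := by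
          have : (p.1 + 1) + (p.2 + 1) = j := by omega
          have h2 : M ^ (p.1 + 1) * M ^ (p.2 + 1) = M ^ j := by rw [← pow_add, this]
          rw [← h2, Matrix.mul_apply, Finset.mul_sum]
          apply Finset.sum_congr rfl
          intro w _
          ring
  calc ∑ p ∈ s, ∑ w, |(B * M ^ p.1) v w| * |(B * M ^ p.2) w v|
      ≤ ∑ _p ∈ s, c₁ ^ 2 * (M ^ j) v v := Finset.sum_le_sum key
    _ = s.card * (c₁ ^ 2 * (M ^ j) v v) := by rw [Finset.sum_const, nsmul_eq_mul]
    _ ≤ j * (c₁ ^ 2 * (M ^ j) v v) := by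
        apply mul_le_mul_of_nonneg_right _ (mul_nonneg (by positivity) hMj)
        have hcard : s.card ≤ j := by
          have h3 := Finset.card_range j
          rw [← h3]
          apply Finset.card_le_card_of_injOn Prod.fst
          · intro p hp
            simp only [hs, Finset.mem_coe, Finset.mem_filter, Finset.mem_product] at hp
            simpa using hp.1.1
          · rintro ⟨a, b⟩ hp ⟨c, d⟩ hq hpq
            simp only [hs, Finset.mem_filter, Finset.mem_coe] at hp hq
            simp only [Prod.fst] at hpq
            have hb : b = d := by omega
            simp [hpq, hb]
        exact_mod_cast hcard
    _ = c₁ ^ 2 * j * (M ^ j) v v := by ring
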